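/- arXiv:1503.06881 — 2 statements merged into one kernel-verified Lean document; each statement's English description precedes it below -/
import Mathlib

section
/- Let A be the 4th-order 2-dimensional real tensor with all entries zero except A_{1112}=A_{1222}=1 and A_{2111}=A_{2122}=-1. Then A has no real Z-eigenpair; that is, there is no real number λ and real vector u ∈ ℝ² with u^T u = 1 such that A u³ = λ u, where (A u³)_j = Σ_{i₂,i₃,i₄} A_{j i₂ i₃ i₄} u_{i₂} u_{i₃} u_{i₄}. -/
open Finset

/-- For a 4th-order 2-dimensional tensor `A`, `(A x³)_j = ∑ A_{j i₂ i₃ i₄} x_{i₂} x_{i₃} x_{i₄}`. -/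
noncomputable def app3 (A : Fin 2 → Fin 2 → Fin 2 → Fin 2 → ℝ) (x : Fin 2 → ℝ) :
    Fin 2 → ℝ :=
  fun j => ∑ a : Fin 2, ∑ b : Fin 2, ∑ c : Fin 2, A j a b c * x a * x b * x c

/-- The tensor with `A_{1112} = A_{1222} = 1`, `A_{2111} = A_{2122} = -1`, all other entries zero. -/
noncomputable def A0 : Fin 2 → Fin 2 → Fin 2 → Fin 2 → ℝ := fun i j k l =>
  if (i, j, k, l) = (0, 0, 0, 1) ∨ (i, j, k, l) = (0, 1, 1, 1) then 1
  else if (i, j, k, l) = (1, 0, 0, 0) ∨ (i, j, k, l) = (1, 0, 1, 1) then -1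
  else 0

/-- The tensor `A0` has no real Z-eigenpair. -/
theorem stmt0 :
    ¬ ∃ (lam : ℝ) (u : Fin 2 → ℝ),
        u 0 ^ 2 + u 1 ^ 2 = 1 ∧ ∀ j, app3 A0 u j = lam * u j := by
  rintro ⟨lam, u, hn, h⟩
  have h0 := h 0
  have h1 := h 1
  simp [app3, A0, Fin.sum_univ_two] at h0 h1
  have key : (u 0 ^ 2 + u 1 ^ 2) ^ 2 = 0 := by linear_combination u 1 * h0 - u 0 * h1
  rw [hn] at key
  norm_num at key
end

section
/- Let A be the 4th-order 2-dimensional real tensor with all entries zero except A_{1112}=A_{1222}=1 and A_{2111}=A_{2122}=-1. Then A has no real H-eigenpair; that is, there is no real number λ and nonzero real vector u = (u₁,u₂) such that (u₁²+u₂²)u₂ = λ u₁³ and -(u₁²+u₂²)u₁ = λ u₂³. -/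
open Finset

lemma sq_sum_zero {a b : ℝ} (h : a ^ 2 + b ^ 2 = 0) : a = 0 ∧ b = 0 := by
  constructor
  · have : a ^ 2 = 0 := le_antisymm (by nlinarith [sq_nonneg b]) (sq_nonneg a)
    exact pow_eq_zero_iff (by norm_num) |>.mp this
  · have : b ^ 2 = 0 := le_antisymm (by nlinarith [sq_nonneg a]) (sq_nonneg b)
    exact pow_eq_zero_iff (by norm_num) |>.mp this

lemma quart_sum_zero {a b : ℝ} (h : a ^ 4 + b ^ 4 = 0) : a = 0 ∧ b = 0 := by
  have ha : a ^ 4 = 0 := le_antisymm (by nlinarith [sq_nonneg (b ^ 2), sq_nonneg (a ^ 2)]) (by positivity)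
  have hb : b ^ 4 = 0 := by nlinarith [ha]
  exact ⟨pow_eq_zero_iff (by norm_num) |>.mp ha, pow_eq_zero_iff (by norm_num) |>.mp hb⟩

/-- The tensor `A0` has no real H-eigenpair: there is no real `λ` and nonzero real `u`
with `A u³ = λ u^{[3]}`. -/
theorem stmt1 :
    ¬ ∃ (lam : ℝ) (u : Fin 2 → ℝ),
        u ≠ 0 ∧ ∀ j, app3 A0 u j = lam * (u j) ^ 3 := by
  rintro ⟨lam, u, hu, h⟩
  have h0 := h 0
  have h1 := h 1
  simp [app3, A0, Fin.sum_univ_two] at h0 h1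
  have hz : u 0 = 0 ∧ u 1 = 0 := by
    have key : lam * (u 0 ^ 4 + u 1 ^ 4) = 0 := by
      linear_combination (-(u 0)) * h0 + (-(u 1)) * h1
    rcases mul_eq_zero.mp key with hl | hs
    · subst hl
      have e0 : u 1 * (u 0 ^ 2 + u 1 ^ 2) = 0 := by linear_combination h0
      have e1 : u 0 * (u 0 ^ 2 + u 1 ^ 2) = 0 := by linear_combination -h1
      rcases mul_eq_zero.mp e0 with h1z | hs2
      · rcases mul_eq_zero.mp e1 with h0z | hs2
        · exact ⟨h0z, h1z⟩
        · exact sq_sum_zero hs2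
      · exact sq_sum_zero hs2
    · exact quart_sum_zero hs
  apply hu
  funext j
  fin_cases j
  · exact hz.1
  · exact hz.2
end
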